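/- Let X be a real random variable with Gaussian distribution N(μ, σ²), and let ν > 0 satisfy σ ≥ ν. Then ℙ(|X| ≥ ν) ≥ 3/10. -/

import Mathlib

open MeasureTheory ProbabilityTheory

namespace Stmt8Aux

open Real

/-- Decreasing even majorant of the standard gaussian kernel. -/
noncomputable def g (x : ℝ) : ℝ := 16 / (4 + x ^ 2) ^ 2

/-- Antiderivative of `g`. -/
noncomputable def G (x : ℝ) : ℝ := 2 * x / (4 + x ^ 2) + Real.arctan (x / 2)

lemma g_pos (x : ℝ) : 0 < g x := by unfold g; positivity

lemma g_continuous : Continuous g := by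
  apply Continuous.div continuous_const (by continuity)
  intro x; positivity

lemma hasDerivAt_G (x : ℝ) : HasDerivAt G (g x) x := by
  have h1 : HasDerivAt (fun x : ℝ => 2 * x / (4 + x ^ 2))
      ((2 * (4 + x ^ 2) - 2 * x * (2 * x)) / (4 + x ^ 2) ^ 2) x := by
    exact (((hasDerivAt_id x).const_mul 2).div
      (((hasDerivAt_id x).pow 2).const_add 4) (by show (4:ℝ) + x ^ 2 ≠ 0; positivity)).congr_deriv (by
        simp)
  have h2 : HasDerivAt (fun x : ℝ => Real.arctan (x / 2))
      ((1 / (1 + (x / 2) ^ 2)) * (1 / 2)) x :=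
    HasDerivAt.comp (h₂ := Real.arctan) x (Real.hasDerivAt_arctan (x / 2)) ((hasDerivAt_id' x).div_const 2)
  have := h1.add h2
  refine this.congr_deriv ?_
  have h4 : (4 : ℝ) + x ^ 2 ≠ 0 := by positivity
  have h5 : (1 : ℝ) + (x / 2) ^ 2 ≠ 0 := by positivity
  unfold g
  field_simp
  ring

lemma G_mono : StrictMono G := by
  apply strictMono_of_deriv_pos
  intro x
  rw [(hasDerivAt_G x).deriv]
  exact g_pos x

lemma G_odd (x : ℝ) : G (-x) = - G x := by
  unfold G
  rw [show -x / 2 = -(x / 2) by ring, Real.arctan_neg]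
  ring_nf

lemma FTC (c d : ℝ) : ∫ x in c..d, g x = G d - G c :=
  intervalIntegral.integral_eq_sub_of_hasDerivAt
    (fun x _ => hasDerivAt_G x) (g_continuous.intervalIntegrable c d)

lemma shift_le {a : ℝ} (ha : -1 ≤ a) : G (a + 2) - G a ≤ 2 * G 1 := by
  have h1 : G (a + 2) - G 1 = ∫ x in (1:ℝ)..(a+2), g x := by rw [FTC]
  have h2 : G a - G (-1) = ∫ x in (-1:ℝ)..a, g x := by rw [FTC]
  have h3 : (∫ x in (1:ℝ)..(a+2), g x) = ∫ x in (-1:ℝ)..a, g (x + 2) := by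
    rw [intervalIntegral.integral_comp_add_right]
    norm_num
  have h4 : (∫ x in (-1:ℝ)..a, g (x + 2)) ≤ ∫ x in (-1:ℝ)..a, g x := by
    apply intervalIntegral.integral_mono_on ha
    · exact (g_continuous.comp (by continuity)).intervalIntegrable _ _
    · exact g_continuous.intervalIntegrable _ _
    · intro x hx
      have hx1 : -1 ≤ x := hx.1
      unfold g
      apply div_le_div_of_nonneg_left (by norm_num) (by positivity)
      nlinarith [sq_nonneg (x + 1), sq_nonneg x, sq_nonneg (x + 2)]
  have h5 : G (-1) = - G 1 := G_odd 1
  linarith [h1, h2, h3 ▸ h4]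

lemma shift_all (a : ℝ) : G (a + 2) - G a ≤ 2 * G 1 := by
  rcases le_or_gt (-1) a with h | h
  · exact shift_le h
  · have := shift_le (a := -a - 2) (by linarith)
    rw [show -a - 2 + 2 = -a by ring, G_odd a, show -a - 2 = -(a + 2) by ring,
      G_odd (a + 2)] at this
    linarith

lemma arctan_half : Real.arctan (1 / 2) ≤ 223 / 480 := by
  have hmono : Monotone (fun x : ℝ => x - x ^ 3 / 3 + x ^ 5 / 5 - Real.arctan x) := by
    apply monotone_of_deriv_nonneg
    · apply Differentiable.sub _ Real.differentiable_arctan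
      fun_prop
    · intro x
      have hd : HasDerivAt (fun x : ℝ => x - x ^ 3 / 3 + x ^ 5 / 5 - Real.arctan x)
          ((1 - (3 * x ^ 2) / 3 + (5 * x ^ 4) / 5) - 1 / (1 + x ^ 2)) x := by
        exact (((hasDerivAt_id x).sub (((hasDerivAt_id x).pow 3).div_const 3)).add
          (((hasDerivAt_id x).pow 5).div_const 5)).sub (Real.hasDerivAt_arctan x)
          |>.congr_deriv (by simp)
      rw [hd.deriv]
      have h1 : (0:ℝ) < 1 + x ^ 2 := by positivity
      rw [sub_nonneg, div_le_iff₀ h1]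
      nlinarith [sq_nonneg (x ^ 3), sq_nonneg x, sq_nonneg (x ^ 2)]
  have := hmono (show (0:ℝ) ≤ 1/2 by norm_num)
  simp only [Real.arctan_zero] at this
  norm_num at this ⊢
  linarith

lemma G_one_bound : 2 * G 1 ≤ 7 / 10 * Real.sqrt (2 * π) := by
  have h1 : G 1 = 2 / 5 + Real.arctan (1 / 2) := by unfold G; norm_num
  have h2 : Real.arctan (1 / 2) ≤ 223 / 480 := arctan_half
  have h3 : (2.4717 : ℝ) ≤ Real.sqrt (2 * π) := by
    rw [show (2.4717:ℝ) = Real.sqrt (2.4717 ^ 2) by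
      rw [Real.sqrt_sq (by norm_num)]]
    apply Real.sqrt_le_sqrt
    nlinarith [Real.pi_gt_d6]
  nlinarith

end Stmt8Aux

open Stmt8Aux Real

/-- If `X ~ N(μ, σ²)` and `0 < ν ≤ σ`, then `ℙ(|X| ≥ ν) ≥ 3/10`. -/
theorem stmt_8 {Ω : Type*} [MeasureSpace Ω] [IsProbabilityMeasure (ℙ : Measure Ω)]
    (X : Ω → ℝ) (m σ ν : ℝ) (hν : 0 < ν) (hσ : ν ≤ σ)
    (hX : Measure.map X ℙ = gaussianReal m (⟨σ ^ 2, sq_nonneg σ⟩ : NNReal)) :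
    3 / 10 ≤ (ℙ {ω | ν ≤ |X ω|}).toReal := by
  have hσ0 : 0 < σ := lt_of_lt_of_le hν hσ
  set v : NNReal := (⟨σ ^ 2, sq_nonneg σ⟩ : NNReal) with hv_def
  have hvr : (v : ℝ) = σ ^ 2 := rfl
  have hv : v ≠ 0 := by
    intro h
    have : (v : ℝ) = 0 := by rw [h]; simp
    rw [hvr] at this
    nlinarith
  have hsπ : (0:ℝ) < Real.sqrt (2 * π) := Real.sqrt_pos.mpr (by positivity)
  set c : ℝ := (σ * Real.sqrt (2 * π))⁻¹ with hc_def
  -- pointwise density bound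
  have hpdf_le : ∀ x : ℝ, gaussianPDFReal m v x ≤ c * g ((x - m) / σ) := by
    intro x
    unfold gaussianPDFReal
    rw [hvr]
    have hsqrt : Real.sqrt (2 * π * σ ^ 2) = σ * Real.sqrt (2 * π) := by
      rw [Real.sqrt_mul (by positivity), Real.sqrt_sq hσ0.le]; ring
    rw [hsqrt, hc_def]
    apply mul_le_mul_of_nonneg_left _ (by positivity)
    set w := (x - m) / σ with hw
    have hxw : (x - m) ^ 2 = w ^ 2 * σ ^ 2 := by
      rw [hw]; field_simp
    have harg : -(x - m) ^ 2 / (2 * σ ^ 2) = -(w ^ 2 / 2) := by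
      rw [hxw]; field_simp
    rw [harg]
    have h1 : (1 + w ^ 2 / 4) ≤ Real.exp (w ^ 2 / 4) := by
      have := Real.add_one_le_exp (w ^ 2 / 4); linarith
    have h2 : (1 + w ^ 2 / 4) ^ 2 ≤ Real.exp (w ^ 2 / 2) := by
      have hm := mul_le_mul h1 h1 (by positivity) (Real.exp_nonneg _)
      rw [← Real.exp_add] at hm
      calc (1 + w ^ 2 / 4) ^ 2 = (1 + w ^ 2 / 4) * (1 + w ^ 2 / 4) := by ring
        _ ≤ Real.exp (w ^ 2 / 4 + w ^ 2 / 4) := hm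
        _ = Real.exp (w ^ 2 / 2) := by ring_nf
    rw [Real.exp_neg]
    unfold g
    rw [inv_eq_one_div, div_le_div_iff₀ (Real.exp_pos _) (by positivity)]
    nlinarith [Real.exp_pos (w ^ 2 / 2)]
  -- integral bound over the window
  have hbound_int : ∫ x in Set.Ioo (-ν) ν, gaussianPDFReal m v x ≤ 7 / 10 := by
    rw [← integral_Ioc_eq_integral_Ioo,
      ← intervalIntegral.integral_of_le (by linarith : -ν ≤ ν)]
    have hcont : Continuous fun x : ℝ => c * g ((x - m) / σ) :=
      continuous_const.mul (g_continuous.comp ((continuous_id.sub continuous_const).div_const σ))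
    have hF : ∀ x : ℝ, HasDerivAt (fun x : ℝ => c * (σ * G ((x - m) / σ)))
        (c * g ((x - m) / σ)) x := by
      intro x
      have hlin : HasDerivAt (fun x : ℝ => (x - m) / σ) (1 / σ) x :=
        ((hasDerivAt_id x).sub_const m).div_const σ
      have := (((hasDerivAt_G ((x - m) / σ)).comp x hlin).const_mul σ).const_mul c
      refine this.congr_deriv ?_
      field_simp
    have hmono2 : (∫ x in (-ν)..ν, gaussianPDFReal m v x)
        ≤ ∫ x in (-ν)..ν, c * g ((x - m) / σ) := by
      apply intervalIntegral.integral_mono_on (by linarith)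
        ((integrable_gaussianPDFReal m v).intervalIntegrable)
        (hcont.intervalIntegrable _ _)
        (fun x _ => hpdf_le x)
    have heval : (∫ x in (-ν)..ν, c * g ((x - m) / σ))
        = c * (σ * G ((ν - m) / σ)) - c * (σ * G ((-ν - m) / σ)) :=
      intervalIntegral.integral_eq_sub_of_hasDerivAt (fun x _ => hF x)
        (hcont.intervalIntegrable _ _)
    set a : ℝ := (-ν - m) / σ with ha_def
    set b : ℝ := (ν - m) / σ with hb_def
    have hba : b ≤ a + 2 := by
      rw [ha_def, hb_def, div_add' _ _ _ hσ0.ne', div_le_div_iff₀ hσ0 hσ0]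
      nlinarith
    have hGb : G b ≤ G (a + 2) := G_mono.monotone hba
    have hshift := shift_all a
    have hGdiff : G b - G a ≤ 7 / 10 * Real.sqrt (2 * π) := by
      have := G_one_bound
      linarith
    have hcσ : c * σ = (Real.sqrt (2 * π))⁻¹ := by
      rw [hc_def]; field_simp
    calc (∫ x in (-ν)..ν, gaussianPDFReal m v x)
        ≤ c * (σ * G b) - c * (σ * G a) := by rw [← heval]; exact hmono2
      _ = (c * σ) * (G b - G a) := by ring
      _ ≤ (Real.sqrt (2 * π))⁻¹ * (7 / 10 * Real.sqrt (2 * π)) := by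
          rw [hcσ]
          apply mul_le_mul_of_nonneg_left hGdiff (by positivity)
      _ = 7 / 10 := by field_simp
  -- measure-theoretic assembly
  have hS : MeasurableSet {x : ℝ | ν ≤ |x|} :=
    measurableSet_le measurable_const continuous_abs.measurable
  have hXm : AEMeasurable X ℙ :=
    aemeasurable_of_map_neZero (by rw [hX]; infer_instance)
  have hmap : ℙ {ω | ν ≤ |X ω|} = gaussianReal m v {x : ℝ | ν ≤ |x|} := by
    rw [← hX, Measure.map_apply_of_aemeasurable hXm hS]
    rfl
  have hcompl : {x : ℝ | ν ≤ |x|}ᶜ = Set.Ioo (-ν) ν := by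
    ext x
    simp [Set.mem_compl_iff, not_le, abs_lt, Set.mem_Ioo]
  have hsplit : (∫ x in {x : ℝ | ν ≤ |x|}, gaussianPDFReal m v x)
      + ∫ x in Set.Ioo (-ν) ν, gaussianPDFReal m v x = 1 := by
    rw [← hcompl, integral_add_compl hS (integrable_gaussianPDFReal m v),
      integral_gaussianPDFReal_eq_one m hv]
  have hge : (3:ℝ) / 10 ≤ ∫ x in {x : ℝ | ν ≤ |x|}, gaussianPDFReal m v x := by
    linarith
  rw [hmap, gaussianReal_apply_eq_integral m hv, ENNReal.toReal_ofReal (by linarith)]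
  exact hge
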